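/- For any univariate polynomials a, b over ℂ and nonnegative integers i, j, one has r_i(a)·r_j(b) ≤ r_{i+j}(ab) in the sense r_i(a) + r_j(b) ≤ r_{i+j}(a·b) when a, b ≠ 0. More precisely: 𝔯_i(a)·𝔯_j(b) divides 𝔯_{i+j}(ab), hence r_i(a) + r_j(b) ≤ r_{i+j}(ab). -/

import Mathlib

open Polynomial

/-- The radical of `g`: product of the distinct monic linear factors of `g`. -/
noncomputable def rad (g : ℂ[X]) : ℂ[X] := ∏ a ∈ g.roots.toFinset, (X - C a)

/-- `radE e g = gcd (g, rad(g)^e)`, the `(e+1)`-th-power-free part of `g`. -/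
noncomputable def radE (e : ℕ) (g : ℂ[X]) : ℂ[X] := EuclideanDomain.gcd g (rad g ^ e)

/-- `rE e g` is the degree of `radE e g`. -/
noncomputable def rE (e : ℕ) (g : ℂ[X]) : ℕ := (radE e g).natDegree

lemma radE_ne_zero {g : ℂ[X]} (hg : g ≠ 0) (e : ℕ) : radE e g ≠ 0 := fun h =>
  hg (EuclideanDomain.gcd_eq_zero_iff.mp h).1

lemma rootMultiplicity_le_of_dvd' {p q : ℂ[X]} (hq : q ≠ 0) (h : p ∣ q) (x : ℂ) :
    rootMultiplicity x p ≤ rootMultiplicity x q := by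
  rw [le_rootMultiplicity_iff hq]
  exact (pow_rootMultiplicity_dvd p x).trans h

lemma rootMultiplicity_gcd {p q : ℂ[X]} (hp : p ≠ 0) (hq : q ≠ 0) (x : ℂ) :
    rootMultiplicity x (EuclideanDomain.gcd p q) =
      min (rootMultiplicity x p) (rootMultiplicity x q) := by
  have hg : EuclideanDomain.gcd p q ≠ 0 := fun h =>
    hp (EuclideanDomain.gcd_eq_zero_iff.mp h).1
  apply le_antisymm
  · exact le_min (rootMultiplicity_le_of_dvd' hp (EuclideanDomain.gcd_dvd_left p q) x)
      (rootMultiplicity_le_of_dvd' hq (EuclideanDomain.gcd_dvd_right p q) x)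
  · rw [le_rootMultiplicity_iff hg]
    exact EuclideanDomain.dvd_gcd
      ((pow_dvd_pow _ (min_le_left _ _)).trans (pow_rootMultiplicity_dvd p x))
      ((pow_dvd_pow _ (min_le_right _ _)).trans (pow_rootMultiplicity_dvd q x))

lemma rootMultiplicity_rad (g : ℂ[X]) (x : ℂ) :
    rootMultiplicity x (rad g) = if x ∈ g.roots then 1 else 0 := by
  classical
  have h : (rad g).roots = g.roots.toFinset.val := roots_prod_X_sub_C _
  rw [← count_roots, h]
  simp [Multiset.count_eq_of_nodup g.roots.toFinset.nodup, Multiset.mem_toFinset]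
  split_ifs with h1 <;> simp_all [Multiset.mem_toFinset]

lemma rootMultiplicity_radE {g : ℂ[X]} (hg : g ≠ 0) (e : ℕ) (x : ℂ) :
    rootMultiplicity x (radE e g) = min (rootMultiplicity x g) e := by
  classical
  have hrad : rad g ≠ 0 := by
    unfold rad
    exact Finset.prod_ne_zero_iff.mpr fun a _ => X_sub_C_ne_zero a
  have hradpow : rad g ^ e ≠ 0 := pow_ne_zero _ hrad
  rw [radE, rootMultiplicity_gcd hg hradpow x]
  have : rootMultiplicity x (rad g ^ e) = e * rootMultiplicity x (rad g) := by
    rw [← count_roots, roots_pow, Multiset.count_nsmul, count_roots]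
  rw [this, rootMultiplicity_rad]
  by_cases hx : x ∈ g.roots
  · simp [hx]
  · have : rootMultiplicity x g = 0 := by
      rw [← count_roots, Multiset.count_eq_zero_of_notMem hx]
    simp [hx, this]

theorem stmt8 (a b : ℂ[X]) (ha : a ≠ 0) (hb : b ≠ 0) (i j : ℕ) :
    radE i a * radE j b ∣ radE (i + j) (a * b) ∧
    rE i a + rE j b ≤ rE (i + j) (a * b) := by
  classical
  have hab : a * b ≠ 0 := mul_ne_zero ha hb
  have hA := radE_ne_zero ha i
  have hB := radE_ne_zero hb j
  have hAB := radE_ne_zero hab (i + j)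
  have hP : radE i a * radE j b ≠ 0 := mul_ne_zero hA hB
  have hdvd : radE i a * radE j b ∣ radE (i + j) (a * b) := by
    apply Splits.dvd_of_roots_le_roots (IsAlgClosed.splits _) hP
    rw [Multiset.le_iff_count]
    intro x
    have h1 : (radE i a * radE j b).roots = (radE i a).roots + (radE j b).roots :=
      roots_mul hP
    rw [h1, Multiset.count_add]
    simp only [count_roots]
    rw [rootMultiplicity_radE ha, rootMultiplicity_radE hb, rootMultiplicity_radE hab,
      rootMultiplicity_mul hab]
    omega
  refine ⟨hdvd, ?_⟩
  have := Polynomial.natDegree_le_of_dvd hdvd hAB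
  rwa [natDegree_mul hA hB] at this
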